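/- Fix p₂ ∈ (0,1) and let p̄₁ ∈ (0,1) satisfy p̄₁ + p₂ < 1, and suppose there exist positive integers i and j with 1 − (1−p̄₁)^i = (1−p₂)^j. Define h(p₁) = ∫₀¹ ⌊ln(1−u)/ln(1−p₁)⌋·⌊ln(u)/ln(1−p₂)⌋ du for p₁ ∈ (0,1). Then the left and right one-sided derivatives of h at p̄₁ exist and are unequal; consequently the partial derivative ∂ρ₋(p₁,p₂)/∂p₁ of the minimum correlation ρ₋(p₁,p₂) = (h(p₁) − m₁m₂)/(σ₁σ₂) has a discontinuity at p̄₁. -/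

import Mathlib

open MeasureTheory

/-- `h p₂ p₁ = ∫₀¹ ⌊ln(1−u)/ln(1−p₁)⌋ · ⌊ln u/ln(1−p₂)⌋ du`, the mean product
`E[X₁X₂]` of the countermonotonic coupling of Geometric(p₁) and Geometric(p₂). -/
noncomputable def antitheticMeanProduct (p₂ p₁ : ℝ) : ℝ :=
  ∫ u in Set.Ioo (0 : ℝ) 1,
    (⌊Real.log (1 - u) / Real.log (1 - p₁)⌋ : ℝ) * (⌊Real.log u / Real.log (1 - p₂)⌋ : ℝ)

private lemma floor_count (q x : ℝ) (hq0 : 0 < q) (hq1 : q < 1) (hx0 : 0 < x) (hx1 : x < 1)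
    (N : ℕ) (hN : q ^ (N + 1) < x) :
    ((⌊Real.log x / Real.log q⌋ : ℤ) : ℝ) =
      ∑ k ∈ Finset.Icc 1 N, if x ≤ q ^ k then (1 : ℝ) else 0 := by
  have hlq : Real.log q < 0 := Real.log_neg hq0 hq1
  have hlx : Real.log x < 0 := Real.log_neg hx0 hx1
  set r := Real.log x / Real.log q with hr
  have hr0 : 0 ≤ r := by
    rw [hr, div_nonneg_iff]; right; exact ⟨hlx.le, hlq.le⟩
  have hrN : ⌊r⌋ ≤ N := by
    have h1 : Real.log (q ^ (N + 1)) < Real.log x := Real.log_lt_log (pow_pos hq0 _) hN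
    rw [Real.log_pow] at h1
    have : r < (N : ℝ) + 1 := by
      rw [hr, div_lt_iff_of_neg hlq]
      push_cast at h1 ⊢; linarith
    have : ⌊r⌋ < (N : ℤ) + 1 := Int.floor_lt.2 (by push_cast; linarith)
    omega
  have key : ∀ k : ℕ, (x ≤ q ^ k ↔ (k : ℤ) ≤ ⌊r⌋) := by
    intro k
    rw [Int.le_floor, hr, le_div_iff_of_neg hlq]
    push_cast
    rw [show (k : ℝ) * Real.log q = Real.log (q ^ k) by rw [Real.log_pow]]
    exact (Real.log_le_log_iff hx0 (pow_pos hq0 _)).symm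
  have hcongr : ∀ k ∈ Finset.Icc 1 N, (if x ≤ q ^ k then (1 : ℝ) else 0)
      = if (k : ℤ) ≤ ⌊r⌋ then 1 else 0 := by
    intro k _; simp [key k]
  rw [Finset.sum_congr rfl hcongr, Finset.sum_boole]
  have hfn : ⌊r⌋ = (⌊r⌋.toNat : ℤ) := (Int.toNat_of_nonneg (Int.floor_nonneg.2 hr0)).symm
  have : (Finset.Icc 1 N).filter (fun k : ℕ => (k : ℤ) ≤ ⌊r⌋) = Finset.Icc 1 ⌊r⌋.toNat := by
    ext k
    simp only [Finset.mem_filter, Finset.mem_Icc]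
    rw [hfn, Int.ofNat_le]
    omega
  rw [this, Nat.card_Icc, Nat.add_sub_cancel]
  exact_mod_cast congrArg (Int.cast : ℤ → ℝ) hfn

private lemma floor_zero (q x : ℝ) (hq0 : 0 < q) (hq : q < x) (hx1 : x < 1) :
    ⌊Real.log x / Real.log q⌋ = 0 := by
  have hx0 : 0 < x := hq0.trans hq
  have hq1 : q < 1 := hq.trans hx1
  have hlq : Real.log q < 0 := Real.log_neg hq0 hq1
  have hlx : Real.log x < 0 := Real.log_neg hx0 hx1
  apply Int.floor_eq_zero_iff.2
  constructor
  · rw [div_nonneg_iff]; right; exact ⟨hlx.le, hlq.le⟩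
  · rw [div_lt_iff_of_neg hlq, one_mul]
    exact Real.log_lt_log hq0 hq

private lemma h_eq_sum (p₂ p₁ : ℝ) (h1 : 0 < p₁) (h2 : p₁ < 1) (h3 : 0 < p₂) (h4 : p₂ < 1)
    (N : ℕ) (hN1 : (1 - p₁) ^ (N + 1) < p₂) (hN2 : (1 - p₂) ^ (N + 1) < p₁) :
    antitheticMeanProduct p₂ p₁ =
      ∑ km ∈ Finset.Icc 1 N ×ˢ Finset.Icc 1 N,
        max 0 ((1 - p₁) ^ km.1 + (1 - p₂) ^ km.2 - 1) := by
  set q₁ := 1 - p₁ with hq₁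
  set q₂ := 1 - p₂ with hq₂
  have hq₁0 : 0 < q₁ := by linarith
  have hq₁1 : q₁ < 1 := by linarith
  have hq₂0 : 0 < q₂ := by linarith
  have hq₂1 : q₂ < 1 := by linarith
  -- pointwise identity on Ioo 0 1
  have hpt : Set.EqOn
      (fun u => (⌊Real.log (1 - u) / Real.log q₁⌋ : ℝ) * (⌊Real.log u / Real.log q₂⌋ : ℝ))
      (fun u => ∑ km ∈ Finset.Icc 1 N ×ˢ Finset.Icc 1 N,
        Set.indicator (Set.Icc (1 - q₁ ^ km.1) (q₂ ^ km.2)) (fun _ => (1:ℝ)) u)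
      (Set.Ioo 0 1) := by
    intro u hu
    obtain ⟨hu0, hu1⟩ := hu
    have hsum_eq : ∀ km : ℕ × ℕ, Set.indicator (Set.Icc (1 - q₁ ^ km.1) (q₂ ^ km.2))
        (fun _ => (1:ℝ)) u
        = (if 1 - u ≤ q₁ ^ km.1 then (1:ℝ) else 0) * (if u ≤ q₂ ^ km.2 then (1:ℝ) else 0) := by
      intro km
      have hiff : u ∈ Set.Icc (1 - q₁ ^ km.1) (q₂ ^ km.2) ↔
          (1 - u ≤ q₁ ^ km.1 ∧ u ≤ q₂ ^ km.2) := by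
        rw [Set.mem_Icc]; constructor <;> rintro ⟨a, b⟩ <;> exact ⟨by linarith, b⟩
      rw [Set.indicator_apply, ite_zero_mul_ite_zero, mul_one, if_congr hiff rfl rfl]
    simp only [hsum_eq]
    rw [Finset.sum_product]
    dsimp only
    rw [← Finset.sum_mul_sum (f := fun k => if 1 - u ≤ q₁ ^ k then (1:ℝ) else 0)
      (g := fun m => if u ≤ q₂ ^ m then (1:ℝ) else 0)]
    by_cases hcase1 : 1 - q₁ ^ (N + 1) ≤ u
    · -- u > q₂, second floor is 0, and all indicators with u ≤ q₂^m fail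
      have huq₂ : q₂ < u := by linarith
      have hz : ⌊Real.log u / Real.log q₂⌋ = 0 := floor_zero q₂ u hq₂0 huq₂ hu1
      have hz2 : (∑ m ∈ Finset.Icc 1 N, if u ≤ q₂ ^ m then (1:ℝ) else 0) = 0 := by
        apply Finset.sum_eq_zero
        intro m hm
        have hm1 : 1 ≤ m := (Finset.mem_Icc.1 hm).1
        have : q₂ ^ m ≤ q₂ ^ 1 := pow_le_pow_of_le_one hq₂0.le hq₂1.le hm1
        rw [if_neg (by rw [pow_one] at this; push_neg; linarith)]
      rw [hz, hz2, Int.cast_zero, mul_zero, mul_zero]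
    · by_cases hcase2 : u ≤ q₂ ^ (N + 1)
      · -- u < p₁, first floor is 0
        have hup : u < p₁ := lt_of_le_of_lt hcase2 hN2
        have h1u : 1 - u < 1 := by linarith
        have hq₁u : q₁ < 1 - u := by rw [hq₁]; linarith
        have hz : ⌊Real.log (1 - u) / Real.log q₁⌋ = 0 := floor_zero q₁ (1-u) hq₁0 hq₁u h1u
        have hz2 : (∑ k ∈ Finset.Icc 1 N, if 1 - u ≤ q₁ ^ k then (1:ℝ) else 0) = 0 := by
          apply Finset.sum_eq_zero
          intro k hk
          have hk1 : 1 ≤ k := (Finset.mem_Icc.1 hk).1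
          have : q₁ ^ k ≤ q₁ ^ 1 := pow_le_pow_of_le_one hq₁0.le hq₁1.le hk1
          rw [if_neg (by rw [pow_one] at this; push_neg; linarith)]
        rw [hz, hz2, Int.cast_zero, zero_mul, zero_mul]
      · push_neg at hcase1 hcase2
        have e1 := floor_count q₁ (1 - u) hq₁0 hq₁1 (by linarith) (by linarith) N (by linarith)
        have e2 := floor_count q₂ u hq₂0 hq₂1 hu0 hu1 N (by linarith)
        rw [e1, e2]
  rw [antitheticMeanProduct, setIntegral_congr_fun measurableSet_Ioo hpt]
  have hInt : ∀ km : ℕ × ℕ, km ∈ Finset.Icc 1 N ×ˢ Finset.Icc 1 N → IntegrableOn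
      (fun u => Set.indicator (Set.Icc (1 - q₁ ^ km.1) (q₂ ^ km.2)) (fun _ => (1:ℝ)) u)
      (Set.Ioo 0 1) := by
    intro km _
    exact (integrableOn_const (by simp [Real.volume_Ioo])).indicator
      measurableSet_Icc
  rw [integral_finset_sum _ hInt]
  apply Finset.sum_congr rfl
  rintro ⟨k, m⟩ hkm
  obtain ⟨hk, hm⟩ := Finset.mem_product.1 hkm
  have hk1 : 1 ≤ k := (Finset.mem_Icc.1 hk).1
  have hm1 : 1 ≤ m := (Finset.mem_Icc.1 hm).1
  have ha0 : 0 < 1 - q₁ ^ k := by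
    have : q₁ ^ k < 1 := pow_lt_one₀ hq₁0.le hq₁1 (by omega)
    linarith
  have hb1 : q₂ ^ m < 1 := pow_lt_one₀ hq₂0.le hq₂1 (by omega)
  rw [setIntegral_indicator measurableSet_Icc]
  have hsub : Set.Icc (1 - q₁ ^ k) (q₂ ^ m) ⊆ Set.Ioo 0 1 := fun x hx =>
    ⟨lt_of_lt_of_le ha0 hx.1, lt_of_le_of_lt hx.2 hb1⟩
  rw [Set.inter_eq_self_of_subset_right hsub]
  rw [setIntegral_const, Real.volume_real_Icc, smul_eq_mul, mul_one]
  rw [max_comm]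
  ring_nf

private lemma term_onesided (k : ℕ) (hk : 1 ≤ k) (c pb : ℝ) (h0 : 0 < pb) (h1 : pb < 1) :
    HasDerivWithinAt (fun p => max 0 ((1 - p) ^ k + c - 1))
      (if 0 ≤ (1 - pb) ^ k + c - 1 then -(k * (1 - pb) ^ (k - 1)) else 0) (Set.Iio pb) pb ∧
    HasDerivWithinAt (fun p => max 0 ((1 - p) ^ k + c - 1))
      (if 0 < (1 - pb) ^ k + c - 1 then -(k * (1 - pb) ^ (k - 1)) else 0) (Set.Ioi pb) pb := by
  have hq0 : 0 < 1 - pb := by linarith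
  have hD : HasDerivAt (fun p : ℝ => (1 - p) ^ k + c - 1) (-(k * (1 - pb) ^ (k - 1))) pb := by
    have h₁ : HasDerivAt (fun p : ℝ => 1 - p) (-1) pb := by
      simpa using (hasDerivAt_id pb).const_sub 1
    have h₂ := (h₁.pow k).add_const (c - 1)
    have heq : (fun x : ℝ => (1 - x) ^ k + (c - 1)) = (fun p : ℝ => (1 - p) ^ k + c - 1) := by
      funext x; ring
    simp only [Pi.pow_apply] at h₂
    rw [heq] at h₂
    exact h₂.congr_deriv (by ring)
  have hcont : ContinuousAt (fun p : ℝ => (1 - p) ^ k + c - 1) pb := hD.continuousAt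
  rcases lt_trichotomy ((1 - pb) ^ k + c - 1) 0 with hc | hc | hc
  · -- eventually negative: max is 0 near pb
    have hev : ∀ᶠ p in nhds pb, max 0 ((1 - p) ^ k + c - 1) = 0 := by
      have : ∀ᶠ p in nhds pb, (1 - p) ^ k + c - 1 < 0 :=
        hcont.eventually_lt continuousAt_const hc
      filter_upwards [this] with p hp using max_eq_left hp.le
    have hz : HasDerivAt (fun p => max 0 ((1 - p) ^ k + c - 1)) 0 pb :=
      (hasDerivAt_const pb 0).congr_of_eventuallyEq (by filter_upwards [hev] with p hp using hp)
    rw [if_neg (by linarith), if_neg (by linarith)]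
    exact ⟨hz.hasDerivWithinAt, hz.hasDerivWithinAt⟩
  · -- kink case
    rw [if_pos hc.symm.le, if_neg (by linarith)]
    constructor
    · -- left: max = f on Iio pb
      apply hD.hasDerivWithinAt.congr
      · intro p hp
        have hplt : p < pb := hp
        have : (1 - pb) ^ k < (1 - p) ^ k :=
          pow_lt_pow_left₀ (by linarith) hq0.le (by omega)
        exact max_eq_right (by linarith)
      · rw [hc]; simp
    · -- right: max = 0 on Ioi pb ∩ Iio 1
      apply (hasDerivWithinAt_const pb _ (0:ℝ)).congr_of_eventuallyEq
      · have h1' : Set.Iio (1:ℝ) ∈ nhdsWithin pb (Set.Ioi pb) :=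
          nhdsWithin_le_nhds (Iio_mem_nhds h1)
        filter_upwards [h1', self_mem_nhdsWithin] with p hp1 hp2
        have : (1 - p) ^ k < (1 - pb) ^ k :=
          pow_lt_pow_left₀ (by exact sub_lt_sub_left hp2 1) (by simp at hp1; linarith) (by omega)
        exact max_eq_left (by linarith)
      · rw [hc]; simp
  · -- smooth positive case
    have hev : ∀ᶠ p in nhds pb, max 0 ((1 - p) ^ k + c - 1) = (1 - p) ^ k + c - 1 := by
      have : ∀ᶠ p in nhds pb, 0 < (1 - p) ^ k + c - 1 :=
        (continuousAt_const.eventually_lt hcont hc)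
      filter_upwards [this] with p hp using max_eq_right hp.le
    have hz : HasDerivAt (fun p => max 0 ((1 - p) ^ k + c - 1)) (-(k * (1 - pb) ^ (k - 1))) pb :=
      hD.congr_of_eventuallyEq (by filter_upwards [hev] with p hp using hp)
    rw [if_pos hc.le, if_pos hc]
    exact ⟨hz.hasDerivWithinAt, hz.hasDerivWithinAt⟩

/-- Fix `p₂ ∈ (0,1)` and let `p̄₁ ∈ (0,1)` with `p̄₁ + p₂ < 1` be such that
`1 − (1−p̄₁)^i = (1−p₂)^j` for some positive integers `i, j`.  Then the one-sided
derivatives of `h(p₁) = ∫₀¹ ⌊ln(1−u)/ln(1−p₁)⌋⌊ln u/ln(1−p₂)⌋ du` at `p̄₁` exist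
and differ; consequently `p₁ ↦ ρ₋(p₁,p₂) = (h(p₁) − m₁m₂)/(σ₁σ₂)` is not
differentiable at `p̄₁`, i.e. `∂ρ₋/∂p₁` has a discontinuity there. -/
theorem partial_deriv_discontinuous (p₂ : ℝ) (hp₂ : p₂ ∈ Set.Ioo (0 : ℝ) 1)
    (pb₁ : ℝ) (hpb₁ : pb₁ ∈ Set.Ioo (0 : ℝ) 1) (hsum : pb₁ + p₂ < 1)
    (i j : ℕ) (hi : 0 < i) (hj : 0 < j) (hij : 1 - (1 - pb₁) ^ i = (1 - p₂) ^ j) :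
    (∃ dL dR : ℝ, HasDerivWithinAt (antitheticMeanProduct p₂) dL (Set.Iio pb₁) pb₁ ∧
        HasDerivWithinAt (antitheticMeanProduct p₂) dR (Set.Ioi pb₁) pb₁ ∧ dL ≠ dR) ∧
      ¬ DifferentiableAt ℝ (fun p₁ =>
          (antitheticMeanProduct p₂ p₁ - ((1 - p₁) / p₁) * ((1 - p₂) / p₂)) /
            ((Real.sqrt (1 - p₁) / p₁) * (Real.sqrt (1 - p₂) / p₂))) pb₁ := by
  obtain ⟨hp₂0, hp₂1⟩ := hp₂
  obtain ⟨hpb0, hpb1⟩ := hpb₁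
  have hq₁0 : 0 < 1 - pb₁ := by linarith
  have hq₁1 : 1 - pb₁ < 1 := by linarith
  have hq₂0 : 0 < 1 - p₂ := by linarith
  have hq₂1 : 1 - p₂ < 1 := by linarith
  -- choose N
  obtain ⟨N₁, hN₁⟩ := exists_pow_lt_of_lt_one hp₂0 hq₁1
  obtain ⟨N₂, hN₂⟩ := exists_pow_lt_of_lt_one hpb0 hq₂1
  set N := max N₁ N₂ with hN
  have hNa : (1 - pb₁) ^ (N + 1) < p₂ :=
    lt_of_le_of_lt (pow_le_pow_of_le_one hq₁0.le hq₁1.le (by omega)) hN₁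
  have hNb : (1 - p₂) ^ (N + 1) < pb₁ :=
    lt_of_le_of_lt (pow_le_pow_of_le_one hq₂0.le hq₂1.le (by omega)) hN₂
  set grid := Finset.Icc 1 N ×ˢ Finset.Icc 1 N with hgrid
  set H : ℝ → ℝ := fun p => ∑ km ∈ grid, max 0 ((1 - p) ^ km.1 + (1 - p₂) ^ km.2 - 1) with hH
  -- eventual equality near pb₁
  have hS : antitheticMeanProduct p₂ =ᶠ[nhds pb₁] H := by
    have c1 : ContinuousAt (fun p : ℝ => (1 - p) ^ (N + 1)) pb₁ := by fun_prop
    have e1 : ∀ᶠ p in nhds pb₁, (1 - p) ^ (N + 1) < p₂ :=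
      c1.eventually_lt continuousAt_const hNa
    have e2 : ∀ᶠ p in nhds pb₁, p ∈ Set.Ioo (0 : ℝ) 1 :=
      Ioo_mem_nhds hpb0 hpb1
    have e3 : ∀ᶠ p in nhds pb₁, (1 - p₂) ^ (N + 1) < p :=
      continuousAt_const.eventually_lt continuousAt_id hNb
    filter_upwards [e1, e2, e3] with p h1 h2 h3
    exact h_eq_sum p₂ p h2.1 h2.2 hp₂0 hp₂1 N h1 h3
  -- one-sided derivatives of H
  set dL : ℝ := ∑ km ∈ grid, (if 0 ≤ (1 - pb₁) ^ km.1 + (1 - p₂) ^ km.2 - 1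
    then -(km.1 * (1 - pb₁) ^ (km.1 - 1)) else 0) with hdL
  set dR : ℝ := ∑ km ∈ grid, (if 0 < (1 - pb₁) ^ km.1 + (1 - p₂) ^ km.2 - 1
    then -(km.1 * (1 - pb₁) ^ (km.1 - 1)) else 0) with hdR
  have hmem1 : ∀ km : ℕ × ℕ, km ∈ grid → 1 ≤ km.1 := fun km hkm =>
    (Finset.mem_Icc.1 (Finset.mem_product.1 hkm).1).1
  have hHL : HasDerivWithinAt H dL (Set.Iio pb₁) pb₁ :=
    HasDerivWithinAt.fun_sum fun km hkm =>
      (term_onesided km.1 (hmem1 km hkm) ((1 - p₂) ^ km.2) pb₁ hpb0 hpb1).1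
  have hHR : HasDerivWithinAt H dR (Set.Ioi pb₁) pb₁ :=
    HasDerivWithinAt.fun_sum fun km hkm =>
      (term_onesided km.1 (hmem1 km hkm) ((1 - p₂) ^ km.2) pb₁ hpb0 hpb1).2
  have hL : HasDerivWithinAt (antitheticMeanProduct p₂) dL (Set.Iio pb₁) pb₁ :=
    hHL.congr_of_eventuallyEq (hS.filter_mono nhdsWithin_le_nhds) hS.self_of_nhds
  have hR : HasDerivWithinAt (antitheticMeanProduct p₂) dR (Set.Ioi pb₁) pb₁ :=
    hHR.congr_of_eventuallyEq (hS.filter_mono nhdsWithin_le_nhds) hS.self_of_nhds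
  -- (i, j) is in the grid and is a kink
  have hkij : (1 - pb₁) ^ i + (1 - p₂) ^ j - 1 = 0 := by linarith
  have hiN : i ≤ N := by
    have h1 : p₂ ≤ (1 - pb₁) ^ i := by
      have : (1 - p₂) ^ j ≤ (1 - p₂) ^ 1 := pow_le_pow_of_le_one hq₂0.le hq₂1.le hj
      rw [pow_one] at this; linarith
    have := (pow_lt_pow_iff_right_of_lt_one₀ hq₁0 hq₁1).1 (lt_of_lt_of_le hNa h1)
    omega
  have hjN : j ≤ N := by
    have h1 : pb₁ ≤ (1 - p₂) ^ j := by
      have : (1 - pb₁) ^ i ≤ (1 - pb₁) ^ 1 := pow_le_pow_of_le_one hq₁0.le hq₁1.le hi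
      rw [pow_one] at this; linarith
    have := (pow_lt_pow_iff_right_of_lt_one₀ hq₂0 hq₂1).1 (lt_of_lt_of_le hNb h1)
    omega
  have hijmem : (i, j) ∈ grid :=
    Finset.mem_product.2 ⟨Finset.mem_Icc.2 ⟨hi, hiN⟩, Finset.mem_Icc.2 ⟨hj, hjN⟩⟩
  have hne : dL ≠ dR := by
    have hlt : dL < dR := by
      rw [hdL, hdR]
      apply Finset.sum_lt_sum
      · intro km hkm
        rcases lt_trichotomy ((1 - pb₁) ^ km.1 + (1 - p₂) ^ km.2 - 1) 0 with hc | hc | hc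
        · rw [if_neg (by linarith), if_neg (by linarith)]
        · rw [if_pos hc.symm.le, if_neg (by linarith)]
          have : (0:ℝ) < km.1 * (1 - pb₁) ^ (km.1 - 1) := by
            apply mul_pos _ (pow_pos hq₁0 _)
            exact_mod_cast Nat.lt_of_lt_of_le Nat.zero_lt_one (hmem1 km hkm)
          linarith
        · rw [if_pos hc.le, if_pos hc]
      · refine ⟨(i, j), hijmem, ?_⟩
        rw [if_pos (by simp only [hkij]; exact le_refl 0), if_neg (by simp only [hkij]; exact lt_irrefl 0)]
        have : (0:ℝ) < i * (1 - pb₁) ^ (i - 1) := by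
          apply mul_pos _ (pow_pos hq₁0 _)
          exact_mod_cast hi
        linarith
    exact hlt.ne
  refine ⟨⟨dL, dR, hL, hR, hne⟩, ?_⟩
  intro hdiff
  -- differentiability of the normalization would make h differentiable
  have hσ : DifferentiableAt ℝ (fun p : ℝ => (Real.sqrt (1 - p) / p) *
      (Real.sqrt (1 - p₂) / p₂)) pb₁ := by
    apply DifferentiableAt.mul_const
    exact DifferentiableAt.div (DifferentiableAt.sqrt (by fun_prop) (ne_of_gt hq₁0))
      differentiableAt_id (ne_of_gt hpb0)
  have hm : DifferentiableAt ℝ (fun p : ℝ => ((1 - p) / p) * ((1 - p₂) / p₂)) pb₁ := by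
    apply DifferentiableAt.mul_const
    exact DifferentiableAt.div (by fun_prop) differentiableAt_id (ne_of_gt hpb0)
  have hcomb : antitheticMeanProduct p₂ =ᶠ[nhds pb₁] fun p =>
      ((antitheticMeanProduct p₂ p - ((1 - p) / p) * ((1 - p₂) / p₂)) /
        ((Real.sqrt (1 - p) / p) * (Real.sqrt (1 - p₂) / p₂))) *
        ((Real.sqrt (1 - p) / p) * (Real.sqrt (1 - p₂) / p₂)) +
        ((1 - p) / p) * ((1 - p₂) / p₂) := by
    filter_upwards [Ioo_mem_nhds hpb0 hpb1] with p hp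
    have hσne : (Real.sqrt (1 - p) / p) * (Real.sqrt (1 - p₂) / p₂) ≠ 0 := by
      apply ne_of_gt
      apply mul_pos <;> apply div_pos
      · exact Real.sqrt_pos.2 (by linarith [hp.2])
      · exact hp.1
      · exact Real.sqrt_pos.2 (by linarith)
      · exact hp₂0
    rw [div_mul_cancel₀ _ hσne]
    ring
  have hhdiff : DifferentiableAt ℝ (antitheticMeanProduct p₂) pb₁ :=
    hcomb.differentiableAt_iff.2 ((hdiff.mul hσ).add hm)
  have hd := hhdiff.hasDerivAt
  have e1 : dL = deriv (antitheticMeanProduct p₂) pb₁ := by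
    rw [← hL.derivWithin (uniqueDiffWithinAt_Iio pb₁),
      hd.hasDerivWithinAt.derivWithin (uniqueDiffWithinAt_Iio pb₁)]
  have e2 : dR = deriv (antitheticMeanProduct p₂) pb₁ := by
    rw [← hR.derivWithin (uniqueDiffWithinAt_Ioi pb₁),
      hd.hasDerivWithinAt.derivWithin (uniqueDiffWithinAt_Ioi pb₁)]
  exact hne (e1.trans e2.symm)
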